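/- Let w be a weight on ℝⁿ, 0 < p < p₀ < ∞, a = p/p₀, and let f, g be nonnegative measurable functions with ∫|f|^p w ≤ K^p and ∫|g|^p w ≤ K^p. Suppose ∫_{ℝⁿ} |f^a - g^a|^{p₀} w dx < ε^{p₀} for some ε > 0. Then ∫_{ℝⁿ} |f - g|^p w dx ≤ a^{-p₀} ε^p + 2 K^p ε^p. -/

import Mathlib

open MeasureTheory Metric Filter ENNReal

lemma bern_aux (a u : ℝ) (ha0 : 0 ≤ a) (ha1 : a ≤ 1) (hu : 0 ≤ u) :
    u ^ a ≤ 1 - a + a * u := by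
  have h := Real.geom_mean_le_arith_mean2_weighted (by linarith : (0:ℝ) ≤ 1 - a) ha0
    zero_le_one hu (by ring)
  simpa using h

lemma concave_rpow_aux (a s t : ℝ) (ha0 : 0 < a) (ha1 : a < 1) (ht : 0 ≤ t) (hts : t ≤ s)
    (hs : 0 < s) : a * s ^ (a - 1) * (s - t) ≤ s ^ a - t ^ a := by
  have h1 : (t / s) ^ a ≤ 1 - a + a * (t / s) :=
    bern_aux a (t / s) ha0.le ha1.le (div_nonneg ht hs.le)
  have hsa : (0:ℝ) < s ^ a := Real.rpow_pos_of_pos hs a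
  have h2 : t ^ a = (t / s) ^ a * s ^ a := by
    rw [Real.div_rpow ht hs.le]
    field_simp
  have h3 : s ^ (a - 1) = s ^ a / s := by
    rw [Real.rpow_sub hs, Real.rpow_one]
  rw [h2, h3]
  have key : (1 - a + a * (t / s)) * s ^ a = s ^ a - a * (s ^ a / s) * (s - t) := by
    field_simp
    ring
  nlinarith [mul_le_mul_of_nonneg_right h1 hsa.le]

lemma key_pointwise (p p₀ ε s t : ℝ) (hp : 0 < p) (hpp₀ : p < p₀) (hε : 0 < ε)
    (ht : 0 ≤ t) (hts : t ≤ s) :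
    (s - t) ^ p ≤ (p / p₀) ^ (-p₀) * ε ^ (p - p₀) * (s ^ (p / p₀) - t ^ (p / p₀)) ^ p₀
      + ε ^ p * s ^ p := by
  set a := p / p₀ with ha
  have hp₀ : 0 < p₀ := hp.trans hpp₀
  have ha0 : 0 < a := div_pos hp hp₀
  have ha1 : a < 1 := (div_lt_one hp₀).2 hpp₀
  have hs : 0 ≤ s := ht.trans hts
  have hst : t ^ a ≤ s ^ a := Real.rpow_le_rpow ht hts ha0.le
  have hT1 : 0 ≤ (p / p₀) ^ (-p₀) * ε ^ (p - p₀) * (s ^ a - t ^ a) ^ p₀ := by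
    have := Real.rpow_nonneg (sub_nonneg.2 hst) p₀
    positivity
  rcases le_or_gt (s - t) (ε * s) with h | h
  · have h0 : (s - t) ^ p ≤ (ε * s) ^ p := Real.rpow_le_rpow (sub_nonneg.2 hts) h hp.le
    rw [Real.mul_rpow hε.le hs] at h0
    linarith
  · have hs0 : 0 < s := by
      rcases hs.lt_or_eq with h' | h'
      · exact h'
      · exfalso
        have ht0 : t = 0 := le_antisymm (h' ▸ hts) ht
        rw [← h', ht0] at h
        simp at h
    have hd : 0 < s - t := lt_of_le_of_lt (by positivity) h
    have hcc : a * s ^ (a - 1) * (s - t) ≤ s ^ a - t ^ a :=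
      concave_rpow_aux a s t ha0 ha1 ht hts hs0
    have hccp : (a * s ^ (a - 1) * (s - t)) ^ p₀ ≤ (s ^ a - t ^ a) ^ p₀ := by
      apply Real.rpow_le_rpow _ hcc hp₀.le
      positivity
    have hexp : (a * s ^ (a - 1) * (s - t)) ^ p₀
        = a ^ p₀ * s ^ (p - p₀) * (s - t) ^ p₀ := by
      have hexp2 : (a - 1) * p₀ = p - p₀ := by
        rw [ha]; field_simp
      rw [Real.mul_rpow (by positivity) hd.le, Real.mul_rpow ha0.le (by positivity),
        ← Real.rpow_mul hs0.le, hexp2]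
    have haa : a ^ (-p₀) * a ^ p₀ = 1 := by
      rw [← Real.rpow_add ha0]; simp
    -- main chain
    have step1 : ε ^ (p - p₀) * s ^ (p - p₀) * (s - t) ^ p₀
        ≤ a ^ (-p₀) * ε ^ (p - p₀) * (s ^ a - t ^ a) ^ p₀ := by
      have hmul : a ^ (-p₀) * ε ^ (p - p₀) * (a * s ^ (a - 1) * (s - t)) ^ p₀
          ≤ a ^ (-p₀) * ε ^ (p - p₀) * (s ^ a - t ^ a) ^ p₀ := by
        apply mul_le_mul_of_nonneg_left hccp
        positivity
      calc ε ^ (p - p₀) * s ^ (p - p₀) * (s - t) ^ p₀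
          = a ^ (-p₀) * ε ^ (p - p₀) * (a ^ p₀ * s ^ (p - p₀) * (s - t) ^ p₀) := by
            rw [show a ^ (-p₀) * ε ^ (p - p₀) * (a ^ p₀ * s ^ (p - p₀) * (s - t) ^ p₀)
              = (a ^ (-p₀) * a ^ p₀) * (ε ^ (p - p₀) * s ^ (p - p₀) * (s - t) ^ p₀) by ring,
              haa, one_mul]
        _ = a ^ (-p₀) * ε ^ (p - p₀) * (a * s ^ (a - 1) * (s - t)) ^ p₀ := by rw [hexp]
        _ ≤ _ := hmul
    have step2 : (s - t) ^ p ≤ ε ^ (p - p₀) * s ^ (p - p₀) * (s - t) ^ p₀ := by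
      have h1 : (s - t) ^ (p - p₀) ≤ (ε * s) ^ (p - p₀) :=
        Real.rpow_le_rpow_of_nonpos (by positivity) h.le (by linarith)
      have h2 : (s - t) ^ p = (s - t) ^ (p - p₀) * (s - t) ^ p₀ := by
        rw [← Real.rpow_add hd]; ring_nf
      rw [h2, Real.mul_rpow hε.le hs0.le] at *
      exact mul_le_mul_of_nonneg_right h1 (by positivity)
    have hsp : (0:ℝ) ≤ ε ^ p * s ^ p := by positivity
    linarith

theorem stmt_8 {n : ℕ} (w : EuclideanSpace ℝ (Fin n) → ℝ)
    (hw_meas : Measurable w) (hw_nonneg : ∀ x, 0 ≤ w x)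
    (p p₀ a : ℝ) (hp : 0 < p) (hpp₀ : p < p₀) (ha : a = p / p₀)
    (f g : EuclideanSpace ℝ (Fin n) → ℝ)
    (hf_meas : Measurable f) (hg_meas : Measurable g)
    (hf_nonneg : ∀ x, 0 ≤ f x) (hg_nonneg : ∀ x, 0 ≤ g x)
    (K ε : ℝ) (hK : 0 ≤ K) (hε : 0 < ε)
    (hfK : (∫⁻ x, ENNReal.ofReal (f x ^ p * w x)) ≤ ENNReal.ofReal (K ^ p))
    (hgK : (∫⁻ x, ENNReal.ofReal (g x ^ p * w x)) ≤ ENNReal.ofReal (K ^ p))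
    (hfg : (∫⁻ x, ENNReal.ofReal (|f x ^ a - g x ^ a| ^ p₀ * w x))
        < ENNReal.ofReal (ε ^ p₀)) :
    (∫⁻ x, ENNReal.ofReal (|f x - g x| ^ p * w x))
      ≤ ENNReal.ofReal (a ^ (-p₀) * ε ^ p + 2 * K ^ p * ε ^ p) := by
  subst ha
  set a := p / p₀ with ha
  have hp₀ : 0 < p₀ := hp.trans hpp₀
  have ha0 : 0 < a := div_pos hp hp₀
  set C : ℝ := a ^ (-p₀) * ε ^ (p - p₀) with hC
  have hC0 : 0 ≤ C := by positivity
  -- pointwise bound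
  have hpt : ∀ x, |f x - g x| ^ p * w x
      ≤ C * (|f x ^ a - g x ^ a| ^ p₀ * w x)
        + ε ^ p * (f x ^ p * w x) + ε ^ p * (g x ^ p * w x) := by
    intro x
    have hfx := hf_nonneg x; have hgx := hg_nonneg x; have hwx := hw_nonneg x
    have base : |f x - g x| ^ p
        ≤ C * |f x ^ a - g x ^ a| ^ p₀ + ε ^ p * (f x ^ p + g x ^ p) := by
      rcases le_total (g x) (f x) with hle | hle
      · have habs : |f x - g x| = f x - g x := abs_of_nonneg (by linarith)
        have habs2 : |f x ^ a - g x ^ a| = f x ^ a - g x ^ a :=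
          abs_of_nonneg (sub_nonneg.2 (Real.rpow_le_rpow hgx hle ha0.le))
        have hk := key_pointwise p p₀ ε (f x) (g x) hp hpp₀ hε hgx hle
        have hg0 : 0 ≤ g x ^ p := Real.rpow_nonneg hgx p
        rw [habs, habs2]
        simp only [← ha] at hk
        rw [← hC] at hk
        nlinarith [mul_nonneg (Real.rpow_nonneg hε.le p) hg0]
      · have habs : |f x - g x| = g x - f x := by
          rw [abs_sub_comm]; exact abs_of_nonneg (by linarith)
        have habs2 : |f x ^ a - g x ^ a| = g x ^ a - f x ^ a := by
          rw [abs_sub_comm]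
          exact abs_of_nonneg (sub_nonneg.2 (Real.rpow_le_rpow hfx hle ha0.le))
        have hk := key_pointwise p p₀ ε (g x) (f x) hp hpp₀ hε hfx hle
        have hf0 : 0 ≤ f x ^ p := Real.rpow_nonneg hfx p
        rw [habs, habs2]
        simp only [← ha] at hk
        rw [← hC] at hk
        nlinarith [mul_nonneg (Real.rpow_nonneg hε.le p) hf0]
    calc |f x - g x| ^ p * w x
        ≤ (C * |f x ^ a - g x ^ a| ^ p₀ + ε ^ p * (f x ^ p + g x ^ p)) * w x :=
          mul_le_mul_of_nonneg_right base hwx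
      _ = C * (|f x ^ a - g x ^ a| ^ p₀ * w x)
          + ε ^ p * (f x ^ p * w x) + ε ^ p * (g x ^ p * w x) := by ring
  -- integrate
  have hεp0 : (0:ℝ) ≤ ε ^ p := Real.rpow_nonneg hε.le p
  have hmono : (∫⁻ x, ENNReal.ofReal (|f x - g x| ^ p * w x))
      ≤ ∫⁻ x, (ENNReal.ofReal C * ENNReal.ofReal (|f x ^ a - g x ^ a| ^ p₀ * w x)
        + ENNReal.ofReal (ε ^ p) * ENNReal.ofReal (f x ^ p * w x)
        + ENNReal.ofReal (ε ^ p) * ENNReal.ofReal (g x ^ p * w x)) := by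
    apply lintegral_mono
    intro x
    have hfx := hf_nonneg x; have hgx := hg_nonneg x; have hwx := hw_nonneg x
    have h1 : (0:ℝ) ≤ |f x ^ a - g x ^ a| ^ p₀ * w x := by positivity
    have h2 : (0:ℝ) ≤ f x ^ p * w x := by
      have := Real.rpow_nonneg hfx p; positivity
    have h3 : (0:ℝ) ≤ g x ^ p * w x := by
      have := Real.rpow_nonneg hgx p; positivity
    calc ENNReal.ofReal (|f x - g x| ^ p * w x)
        ≤ ENNReal.ofReal (C * (|f x ^ a - g x ^ a| ^ p₀ * w x)
          + ε ^ p * (f x ^ p * w x) + ε ^ p * (g x ^ p * w x)) :=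
          ENNReal.ofReal_le_ofReal (hpt x)
      _ = _ := by
          rw [ENNReal.ofReal_add (by positivity) (by positivity),
            ENNReal.ofReal_add (by positivity) (by positivity),
            ENNReal.ofReal_mul hC0, ENNReal.ofReal_mul hεp0, ENNReal.ofReal_mul hεp0]
  have hA_meas : Measurable fun x => ENNReal.ofReal (|f x ^ a - g x ^ a| ^ p₀ * w x) := by
    apply Measurable.ennreal_ofReal
    exact (((((hf_meas.pow measurable_const).sub
      (hg_meas.pow measurable_const)).abs).pow measurable_const).mul hw_meas)
  have hF_meas : Measurable fun x => ENNReal.ofReal (f x ^ p * w x) := by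
    apply Measurable.ennreal_ofReal
    exact ((hf_meas.pow measurable_const).mul hw_meas)
  have hG_meas : Measurable fun x => ENNReal.ofReal (g x ^ p * w x) := by
    apply Measurable.ennreal_ofReal
    exact ((hg_meas.pow measurable_const).mul hw_meas)
  rw [lintegral_add_left (f := fun x => ENNReal.ofReal C * ENNReal.ofReal (|f x ^ a - g x ^ a| ^ p₀ * w x)
        + ENNReal.ofReal (ε ^ p) * ENNReal.ofReal (f x ^ p * w x)) ((hA_meas.const_mul _).add
      (hF_meas.const_mul _)),
    lintegral_add_left (hA_meas.const_mul _),
    lintegral_const_mul _ hA_meas, lintegral_const_mul _ hF_meas,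
    lintegral_const_mul _ hG_meas] at hmono
  refine hmono.trans ?_
  have hbound : ENNReal.ofReal C * (∫⁻ x, ENNReal.ofReal (|f x ^ a - g x ^ a| ^ p₀ * w x))
      ≤ ENNReal.ofReal (a ^ (-p₀) * ε ^ p) := by
    calc ENNReal.ofReal C * (∫⁻ x, ENNReal.ofReal (|f x ^ a - g x ^ a| ^ p₀ * w x))
        ≤ ENNReal.ofReal C * ENNReal.ofReal (ε ^ p₀) :=
          mul_le_mul_right hfg.le _
      _ = ENNReal.ofReal (C * ε ^ p₀) := (ENNReal.ofReal_mul hC0).symm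
      _ = ENNReal.ofReal (a ^ (-p₀) * ε ^ p) := by
          congr 1
          rw [hC, mul_assoc, ← Real.rpow_add hε]
          ring_nf
  have hbf : ENNReal.ofReal (ε ^ p) * (∫⁻ x, ENNReal.ofReal (f x ^ p * w x))
      ≤ ENNReal.ofReal (ε ^ p * K ^ p) := by
    calc ENNReal.ofReal (ε ^ p) * (∫⁻ x, ENNReal.ofReal (f x ^ p * w x))
        ≤ ENNReal.ofReal (ε ^ p) * ENNReal.ofReal (K ^ p) := mul_le_mul_right hfK _
      _ = ENNReal.ofReal (ε ^ p * K ^ p) := (ENNReal.ofReal_mul hεp0).symm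
  have hbg : ENNReal.ofReal (ε ^ p) * (∫⁻ x, ENNReal.ofReal (g x ^ p * w x))
      ≤ ENNReal.ofReal (ε ^ p * K ^ p) := by
    calc ENNReal.ofReal (ε ^ p) * (∫⁻ x, ENNReal.ofReal (g x ^ p * w x))
        ≤ ENNReal.ofReal (ε ^ p) * ENNReal.ofReal (K ^ p) := mul_le_mul_right hgK _
      _ = ENNReal.ofReal (ε ^ p * K ^ p) := (ENNReal.ofReal_mul hεp0).symm
  calc _ ≤ ENNReal.ofReal (a ^ (-p₀) * ε ^ p) + ENNReal.ofReal (ε ^ p * K ^ p)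
        + ENNReal.ofReal (ε ^ p * K ^ p) := by
        exact add_le_add (add_le_add hbound hbf) hbg
    _ = ENNReal.ofReal (a ^ (-p₀) * ε ^ p + 2 * K ^ p * ε ^ p) := by
        have hKp0 : (0:ℝ) ≤ K ^ p := Real.rpow_nonneg hK p
        rw [← ENNReal.ofReal_add (by positivity) (by positivity),
          ← ENNReal.ofReal_add (by positivity) (by positivity)]
        ring_nf
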